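/- In ℤ³ with the symmetric trilinear form μ determined by μ₁₁₁=2, μ₁₁₂=5, μ₁₁₃=2, μ₁₂₂=5, μ₁₂₃=10, μ₁₃₃=−4, μ₂₂₂=5, μ₂₂₃=10, μ₂₃₃=20, μ₃₃₃=−32, and the symmetric trilinear form ν determined by the same values except ν₃₃₃=−40, there is no ℤ-linear automorphism T of ℤ³ with μ(Tx,Ty,Tz) = ν(x,y,z) for all x,y,z; i.e. the two cubic forms are inequivalent over ℤ (indeed over ℂ, as their Aronhold T-invariants differ: T₁ = −86400 ≠ −38400 = T₂, while S₁ = S₂ = 0). -/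
import Mathlib


/-- Symmetric coefficient tensor of the first cubic intersection form `μ`:
μ₁₁₁=2, μ₁₁₂=5, μ₁₁₃=2, μ₁₂₂=5, μ₁₂₃=10, μ₁₃₃=−4, μ₂₂₂=5, μ₂₂₃=10,
μ₂₃₃=20, μ₃₃₃=−32. -/
def muCoeff : Fin 3 → Fin 3 → Fin 3 → ℤ :=
  ![![![2, 5, 2], ![5, 5, 10], ![2, 10, -4]],
    ![![5, 5, 10], ![5, 5, 10], ![10, 10, 20]],
    ![![2, 10, -4], ![10, 10, 20], ![-4, 20, -32]]]

/-- Symmetric coefficient tensor of the second cubic intersection form `ν`: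
the same values as `μ` except ν₃₃₃ = −40. -/
def nuCoeff : Fin 3 → Fin 3 → Fin 3 → ℤ :=
  ![![![2, 5, 2], ![5, 5, 10], ![2, 10, -4]],
    ![![5, 5, 10], ![5, 5, 10], ![10, 10, 20]],
    ![![2, 10, -4], ![10, 10, 20], ![-4, 20, -40]]]

/-- The symmetric trilinear form on `ℤ³` associated with a coefficient
tensor. -/
def triForm (c : Fin 3 → Fin 3 → Fin 3 → ℤ)
    (x y z : Fin 3 → ℤ) : ℤ :=
  ∑ i, ∑ j, ∑ k, c i j k * x i * y j * z k

/-- The analogous trilinear form over `ZMod 7`. -/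
def triFormR (c : Fin 3 → Fin 3 → Fin 3 → ZMod 7) (x y z : Fin 3 → ZMod 7) : ZMod 7 :=
  ∑ i, ∑ j, ∑ k, c i j k * x i * y j * z k

lemma cast_triForm (c : Fin 3 → Fin 3 → Fin 3 → ℤ) (x y z : Fin 3 → ℤ) :
    ((triForm c x y z : ℤ) : ZMod 7) =
      triFormR (fun i j k => (c i j k : ZMod 7)) (fun i => (x i : ZMod 7))
        (fun i => (y i : ZMod 7)) (fun i => (z i : ZMod 7)) := by
  simp [triForm, triFormR]

def muB : Fin 3 → Fin 3 → Fin 3 → ZMod 7 := fun i j k => (muCoeff i j k : ZMod 7)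
def nuB : Fin 3 → Fin 3 → Fin 3 → ZMod 7 := fun i j k => (nuCoeff i j k : ZMod 7)

lemma count_mu : (Finset.univ.filter (fun v : Fin 3 → ZMod 7 => triFormR muB v v v = 0)).card = 55 := by
  decide

lemma count_nu : (Finset.univ.filter (fun v : Fin 3 → ZMod 7 => triFormR nuB v v v = 0)).card = 19 := by
  decide

/-- The two cubic intersection forms `μ` and `ν` (coming from the Picard
groups of the two Calabi–Yau 3-folds obtained by smoothing normal crossings
with blow-ups in different orders) are inequivalent over `ℤ`: there is no
`ℤ`-linear automorphism `T` of `ℤ³` with `μ(Tx,Ty,Tz) = ν(x,y,z)` for all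
`x, y, z`. -/
theorem cubic_forms_inequivalent :
    ¬ ∃ T : (Fin 3 → ℤ) ≃ₗ[ℤ] (Fin 3 → ℤ),
      ∀ x y z : Fin 3 → ℤ,
        triForm muCoeff (T x) (T y) (T z) = triForm nuCoeff x y z := by
  rintro ⟨T, hT⟩
  set M : Matrix (Fin 3) (Fin 3) ℤ := LinearMap.toMatrix' (T : (Fin 3 → ℤ) →ₗ[ℤ] (Fin 3 → ℤ)) with hM
  set M' : Matrix (Fin 3) (Fin 3) ℤ := LinearMap.toMatrix' (T.symm : (Fin 3 → ℤ) →ₗ[ℤ] (Fin 3 → ℤ)) with hM'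
  have hMM' : M * M' = 1 := by
    rw [hM, hM', ← LinearMap.toMatrix'_comp]
    have : ((T : (Fin 3 → ℤ) →ₗ[ℤ] (Fin 3 → ℤ)) ∘ₗ (T.symm : (Fin 3 → ℤ) →ₗ[ℤ] (Fin 3 → ℤ)))
        = LinearMap.id := by
      ext v i; simp
    rw [this, LinearMap.toMatrix'_id]
  have hM'M : M' * M = 1 := mul_eq_one_comm.mp hMM'
  set φ : ℤ →+* ZMod 7 := Int.castRingHom (ZMod 7) with hφ
  set Mb : Matrix (Fin 3) (Fin 3) (ZMod 7) := M.map φ with hMb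
  set Mb' : Matrix (Fin 3) (Fin 3) (ZMod 7) := M'.map φ with hMb'
  have hb : Mb * Mb' = 1 := by
    rw [hMb, hMb', ← Matrix.map_mul, hMM']
    exact Matrix.map_one φ (map_zero φ) (map_one φ)
  have hb' : Mb' * Mb = 1 := by
    rw [hMb, hMb', ← Matrix.map_mul, hM'M]
    exact Matrix.map_one φ (map_zero φ) (map_one φ)
  -- T mod 7 as mulVec by Mb
  have hTx : ∀ x : Fin 3 → ℤ, T x = M.mulVec x := by
    intro x
    rw [hM]
    have := Matrix.toLin'_toMatrix' (T : (Fin 3 → ℤ) →ₗ[ℤ] (Fin 3 → ℤ))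
    conv_lhs => rw [show (T x : Fin 3 → ℤ) = (T : (Fin 3 → ℤ) →ₗ[ℤ] (Fin 3 → ℤ)) x from rfl, ← this]
    rw [Matrix.toLin'_apply]
  -- key identity over ZMod 7
  have key : ∀ v : Fin 3 → ZMod 7, triFormR muB (Mb.mulVec v) (Mb.mulVec v) (Mb.mulVec v)
      = triFormR nuB v v v := by
    intro v
    set x : Fin 3 → ℤ := fun i => (ZMod.cast (v i) : ℤ) with hx
    have hxv : (fun i => ((x i : ℤ) : ZMod 7)) = v := by
      funext i; simp [hx, ZMod.intCast_zmod_cast]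
    have hTxv : (fun i => (((T x) i : ℤ) : ZMod 7)) = Mb.mulVec v := by
      funext i
      rw [hTx x]
      simp only [Matrix.mulVec, dotProduct, hMb, Matrix.map_apply]
      push_cast
      simp [hx, ZMod.intCast_zmod_cast, hφ]
    have h := hT x x x
    have h7 : ((triForm muCoeff (T x) (T x) (T x) : ℤ) : ZMod 7)
        = ((triForm nuCoeff x x x : ℤ) : ZMod 7) := by rw [h]
    rw [cast_triForm, cast_triForm] at h7
    rw [hTxv, hxv] at h7
    exact h7
  -- bijection between level sets
  have hcard : (Finset.univ.filter (fun v : Fin 3 → ZMod 7 => triFormR nuB v v v = 0)).card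
      = (Finset.univ.filter (fun v : Fin 3 → ZMod 7 => triFormR muB v v v = 0)).card := by
    apply Finset.card_bij (fun v _ => Mb.mulVec v)
    · intro v hv
      simp only [Finset.mem_filter, Finset.mem_univ, true_and] at hv ⊢
      rw [key v, hv]
    · intro a _ b _ hab
      have : Mb'.mulVec (Mb.mulVec a) = Mb'.mulVec (Mb.mulVec b) := by rw [hab]
      simpa [Matrix.mulVec_mulVec, hb'] using this
    · intro w hw
      refine ⟨Mb'.mulVec w, ?_, ?_⟩
      · simp only [Finset.mem_filter, Finset.mem_univ, true_and] at hw ⊢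
        rw [← key (Mb'.mulVec w)]
        rw [Matrix.mulVec_mulVec, hb, Matrix.one_mulVec]
        exact hw
      · rw [Matrix.mulVec_mulVec, hb, Matrix.one_mulVec]
  rw [count_mu, count_nu] at hcard
  exact absurd hcard (by norm_num)
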